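/- Let F be a field of characteristic not 2, let D be a quaternion division algebra over F with norm form q_D = ⟨1, -a, -b, ab⟩, and let c ∈ F^×. Then F(√c) embeds as a maximal subfield of D if and only if c is not a square in F and there exist x, y, z ∈ F with c = a·x² + b·y² − a·b·z². -/

import Mathlib

set_option synthInstance.maxHeartbeats 1000000
set_option maxHeartbeats 1000000

open Quaternion Polynomial

/-- The diagonal quadratic form `⟨w i⟩_{i : ι}` over a commutative ring `R`. -/
noncomputable def diagQF (R : Type) [CommRing R] {ι : Type} [Fintype ι] (w : ι → R) :
    QuadraticForm R (ι → R) :=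
  QuadraticMap.weightedSumSquares R w

/-- The orthogonal sum of `m` hyperbolic planes, realized as the split form
`⟨1, -1, 1, -1, …⟩` of dimension `2 * m` (valid in characteristic `≠ 2`). -/
noncomputable def hypQF (R : Type) [CommRing R] (m : ℕ) : QuadraticForm R (Fin (2 * m) → R) :=
  diagQF R (fun i => if (i : ℕ) % 2 = 0 then (1 : R) else -1)

/-- Two quadratic forms are Witt equivalent if they become isometric after adding
(split) hyperbolic spaces to each of them. -/
def WittEquiv (R : Type) [CommRing R] {M₁ M₂ : Type} [AddCommGroup M₁] [Module R M₁]
    [AddCommGroup M₂] [Module R M₂]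
    (q₁ : QuadraticForm R M₁) (q₂ : QuadraticForm R M₂) : Prop :=
  ∃ m n : ℕ, QuadraticMap.Equivalent (q₁.prod (hypQF R m)) (q₂.prod (hypQF R n))

/-- The quadratic algebra `R(√c) = R[X]/(X² - c)`. -/
noncomputable def QuadExt (R : Type) [CommRing R] (c : R) : Type :=
  AdjoinRoot (X ^ 2 - C c : R[X])

noncomputable instance (R : Type) [CommRing R] (c : R) : CommRing (QuadExt R c) :=
  inferInstanceAs (CommRing (AdjoinRoot _))

noncomputable instance (R : Type) [CommRing R] (c : R) : Algebra R (QuadExt R c) :=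
  inferInstanceAs (Algebra R (AdjoinRoot _))

/-- `R(√c)` embeds into the `R`-algebra `D` (for `c` a nonsquare and `D` a quaternion
division algebra this says exactly that `R(√c)` is a maximal subfield of `D`). -/
def EmbedsIn (R : Type) [CommRing R] (c : R) (D : Type) [Ring D] [Algebra R D] : Prop :=
  ∃ f : QuadExt R c →ₐ[R] D, Function.Injective f

/-- A (nontrivial) ring is a division ring iff every nonzero element is a unit. -/
def IsDivisionAlgebra (D : Type) [Ring D] : Prop :=
  ∀ x : D, x ≠ 0 → IsUnit x

/-- The quaternion algebras `(a,b/R)` and `(a',b'/R)` are linked: they share a common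
quadratic (maximal) subfield `R(√c)`. -/
noncomputable def LinkedAlg (R : Type) [CommRing R] (a b a' b' : R) : Prop :=
  ∃ c : R, ¬ IsSquare c ∧ EmbedsIn R c ℍ[R, a, b] ∧ EmbedsIn R c ℍ[R, a', b']

open MvPolynomial in
/-- The quadratic polynomial `∑ w i * xᵢ²` associated to the diagonal form `⟨w⟩`. -/
noncomputable def quadricPoly (F : Type) [Field F] {n : ℕ} (w : Fin n → F) :
    MvPolynomial (Fin n) F :=
  ∑ i, MvPolynomial.C (w i) * MvPolynomial.X i ^ 2

/-- The "big" function field `F[φ] = Frac(F[x₁,…,xₙ]/(φ))` of the quadric `φ = 0`,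
for the diagonal form `φ = ⟨w⟩`. -/
noncomputable abbrev FunctionFieldQF (F : Type) [Field F] {n : ℕ} (w : Fin n → F) : Type :=
  FractionRing (MvPolynomial (Fin n) F ⧸ Ideal.span {quadricPoly F w})

open Polynomial in
/-- Lift of `R(√c) → D` sending `√c ↦ u` when `u² = c`, valid for noncommutative `D`. -/
noncomputable def quadExtLiftnc (F : Type) [CommRing F] (c : F) (D : Type) [Ring D]
    [Algebra F D] (u : D) (h : Polynomial.aeval u (X ^ 2 - C c : F[X]) = 0) :
    QuadExt F c →ₐ[F] D :=
  { Ideal.Quotient.lift (Ideal.span {(X ^ 2 - C c : F[X])})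
      ((Polynomial.aeval u : F[X] →ₐ[F] D) : F[X] →+* D)
      (by
        intro g hg
        rw [Ideal.mem_span_singleton] at hg
        obtain ⟨q, rfl⟩ := hg
        simp [map_mul, h]) with
    commutes' := fun r => by
      have h1 : (algebraMap F (QuadExt F c) r)
          = Ideal.Quotient.mk (Ideal.span {(X ^ 2 - C c : F[X])}) (C r) := rfl
      show Ideal.Quotient.lift _ _ _ (algebraMap F (QuadExt F c) r) = _
      rw [h1, Ideal.Quotient.lift_mk]
      simp }

/-- Let `F` be a field of characteristic `≠ 2`, `D = (a,b/F)` a quaternion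
division algebra with norm form `⟨1,-a,-b,ab⟩`, and `c ∈ F^×`.  Then `F(√c)` embeds as a
maximal subfield of `D` iff `c` is a nonsquare and `c = a x² + b y² - a b z²` for some
`x, y, z ∈ F`.  (For a quaternion division algebra every quadratic subfield is a maximal
subfield, so `EmbedsIn` captures embedding as a maximal subfield.) -/
theorem maximal_subfield_iff_represented (F : Type) [Field F] (hchar : (2 : F) ≠ 0)
    (a b c : F) (ha : a ≠ 0) (hb : b ≠ 0) (hc : c ≠ 0)
    (hdiv : IsDivisionAlgebra ℍ[F, a, b]) :
    EmbedsIn F c ℍ[F, a, b] ↔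
      ¬ IsSquare c ∧ ∃ x y z : F, c = a * x ^ 2 + b * y ^ 2 - a * b * z ^ 2 := by
  classical
  have hzd : ∀ u v : ℍ[F,a,b], u * v = 0 → u = 0 ∨ v = 0 := by
    intro u v huv
    by_cases hu : u = 0
    · exact Or.inl hu
    · exact Or.inr ((hdiv u hu).mul_left_cancel (by rw [huv, mul_zero]))
  have hmon : (X ^ 2 - C c : F[X]).Monic := by
    simpa using Polynomial.monic_X_pow_sub_C c (two_ne_zero (α := ℕ))
  have hnd : (X ^ 2 - C c : F[X]).natDegree = 2 := by
    simp [Polynomial.natDegree_X_pow_sub_C]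
  have hroot : (AdjoinRoot.root (X ^ 2 - C c : F[X])) ^ 2
      = algebraMap F (AdjoinRoot (X ^ 2 - C c : F[X])) c := by
    have := AdjoinRoot.eval₂_root (X ^ 2 - C c : F[X])
    rw [eval₂_sub, eval₂_C, eval₂_pow, eval₂_X, sub_eq_zero] at this
    rw [this, AdjoinRoot.algebraMap_eq]
  constructor
  · rintro ⟨f, hf⟩
    -- first: c is not a square
    have hns : ¬ IsSquare c := by
      rintro ⟨s, hs⟩
      set P : F[X] := X ^ 2 - C c with hP
      have hfac : (X - C s) * (X + C s) = P := by
        rw [hP, hs, C_mul]; ring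
      have hp0 : AdjoinRoot.mk P (X - C s) ≠ 0 := by
        refine AdjoinRoot.mk_ne_zero_of_natDegree_lt hmon ?_ ?_
        · intro h
          simpa using congrArg Polynomial.natDegree h
        · rw [hnd]
          simpa using Polynomial.natDegree_X_sub_C s
      have hq0 : AdjoinRoot.mk P (X + C s) ≠ 0 := by
        refine AdjoinRoot.mk_ne_zero_of_natDegree_lt hmon ?_ ?_
        · intro h
          have h1 := congrArg (fun g => Polynomial.coeff g 1) h
          simp at h1
        · rw [hnd, Polynomial.natDegree_X_add_C]
          norm_num
      have hpq : (AdjoinRoot.mk P (X - C s) : QuadExt F c) * AdjoinRoot.mk P (X + C s) = 0 := by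
        show AdjoinRoot.mk P (X - C s) * AdjoinRoot.mk P (X + C s) = 0
        rw [← map_mul, hfac, AdjoinRoot.mk_self]
      have := hzd _ _ (by rw [← map_mul f]; exact (congrArg f hpq).trans (map_zero f))
      rcases this with h | h
      · exact hp0 (hf (by rw [h]; exact (map_zero f).symm))
      · exact hq0 (hf (by rw [h]; exact (map_zero f).symm))
    refine ⟨hns, ?_⟩
    set u : ℍ[F,a,b] := f (AdjoinRoot.root (X ^ 2 - C c : F[X])) with hu
    have hu2 : u * u = algebraMap F ℍ[F,a,b] c := by
      rw [hu]; refine (map_mul f _ _).symm.trans ((congrArg f (sq (AdjoinRoot.root (X ^ 2 - C c : F[X]) : QuadExt F c)).symm).trans ?_)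
      show f ((AdjoinRoot.root (X ^ 2 - C c : F[X])) ^ 2) = _
      refine (congrArg f hroot).trans ?_
      exact f.commutes c
    have hre : u.re * u.re + a * u.imI * u.imI + b * u.imJ * u.imJ
        - a * b * u.imK * u.imK = c := by
      have := congrArg QuaternionAlgebra.re hu2
      simpa [QuaternionAlgebra.re_mul, QuaternionAlgebra.algebraMap_eq] using this
    have hI : (2 : F) * (u.re * u.imI) = 0 := by
      have := congrArg QuaternionAlgebra.imI hu2
      simp only [QuaternionAlgebra.imI_mul, QuaternionAlgebra.algebraMap_eq] at this
      linear_combination this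
    have hJ : (2 : F) * (u.re * u.imJ) = 0 := by
      have := congrArg QuaternionAlgebra.imJ hu2
      simp only [QuaternionAlgebra.imJ_mul, QuaternionAlgebra.algebraMap_eq] at this
      linear_combination this
    have hK : (2 : F) * (u.re * u.imK) = 0 := by
      have := congrArg QuaternionAlgebra.imK hu2
      simp only [QuaternionAlgebra.imK_mul, QuaternionAlgebra.algebraMap_eq] at this
      linear_combination this
    by_cases hw : u.re = 0
    · refine ⟨u.imI, u.imJ, u.imK, ?_⟩
      rw [hw] at hre
      linear_combination -hre
    · exfalso
      have hx : u.imI = 0 := by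
        rcases mul_eq_zero.1 hI with h | h
        · exact absurd h hchar
        · rcases mul_eq_zero.1 h with h' | h'
          · exact absurd h' hw
          · exact h'
      have hy : u.imJ = 0 := by
        rcases mul_eq_zero.1 hJ with h | h
        · exact absurd h hchar
        · rcases mul_eq_zero.1 h with h' | h'
          · exact absurd h' hw
          · exact h'
      have hz : u.imK = 0 := by
        rcases mul_eq_zero.1 hK with h | h
        · exact absurd h hchar
        · rcases mul_eq_zero.1 h with h' | h'
          · exact absurd h' hw
          · exact h'
      exact hns ⟨u.re, by rw [hx, hy, hz] at hre; linear_combination -hre⟩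
  · rintro ⟨hns, x, y, z, hxyz⟩
    set u : ℍ[F,a,b] := ⟨0, x, y, z⟩ with hu
    have hu2 : u * u = algebraMap F ℍ[F,a,b] c := by
      rw [QuaternionAlgebra.algebraMap_eq]
      ext <;> simp [hu] <;> first | linear_combination -hxyz | linear_combination (-2 : F) * hxyz | ring
    have haev : (Polynomial.aeval u) (X ^ 2 - C c : F[X]) = 0 := by
      rw [map_sub, map_pow, Polynomial.aeval_X, Polynomial.aeval_C, sq, hu2, sub_self]
    have hirr : Irreducible (X ^ 2 - C c : F[X]) :=
      X_pow_sub_C_irreducible_of_prime Nat.prime_two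
        (fun s hs => hns ⟨s, by rw [← hs]; ring⟩)
    haveI : Fact (Irreducible (X ^ 2 - C c : F[X])) := ⟨hirr⟩
    refine ⟨quadExtLiftnc F c ℍ[F,a,b] u haev, ?_⟩
    intro p q hpq
    by_contra hne
    have hsub : p - q ≠ 0 := sub_ne_zero.2 hne
    obtain ⟨t, ht⟩ : ∃ t : QuadExt F c, (p - q) * t = 1 := by
      letI : Field (QuadExt F c) := (inferInstance : Field (AdjoinRoot (X ^ 2 - C c : F[X])))
      exact ⟨(p - q)⁻¹, mul_inv_cancel₀ hsub⟩
    have h0 : (quadExtLiftnc F c ℍ[F,a,b] u haev) (p - q) = 0 := by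
      rw [map_sub, hpq, sub_self]
    have h1 : (1 : ℍ[F,a,b]) = 0 := by
      have h2 := congrArg (quadExtLiftnc F c ℍ[F,a,b] u haev) ht
      rw [map_mul, map_one, h0, zero_mul] at h2
      exact h2.symm
    exact one_ne_zero h1
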